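/- Let p be an odd prime and χ the quadratic character of F_p. Then Σ χ(ab+1), summed over all ordered pairs (a,b) of distinct nonzero elements of F_p, equals -(p-3). -/
import Mathlib

theorem S2_sum (p : ℕ) [Fact p.Prime] (hodd : p % 2 = 1) :
    (∑ a : ZMod p, ∑ b : ZMod p,
      if a ≠ 0 ∧ b ≠ 0 ∧ a ≠ b then quadraticChar (ZMod p) (a * b + 1) else 0) =
      -((p : ℤ) - 3) := by
  have hp : p.Prime := Fact.out
  have hp2 : p ≠ 2 := by rintro rfl; simp at hodd
  have hchar : ringChar (ZMod p) ≠ 2 := by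
    rw [ZMod.ringChar_zmod_n]; exact hp2
  have h2 : (2 : ZMod p) ≠ 0 := by
    intro h
    have : p ∣ 2 := by exact_mod_cast (ZMod.natCast_eq_zero_iff 2 p).mp (by exact_mod_cast h)
    exact hp2 ((Nat.prime_dvd_prime_iff_eq hp Nat.prime_two).mp this)
  set χ : MulChar (ZMod p) ℤ := quadraticChar (ZMod p) with hχdef
  have hcardp : ∑ _a : ZMod p, (1 : ℤ) = (p : ℤ) := by
    simp [Finset.card_univ, ZMod.card]
  -- sum of χ(c+1) over all c is 0
  have hshift : ∑ c : ZMod p, χ (c + 1) = 0 := by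
    rw [← quadraticChar_sum_zero hchar]
    exact Fintype.sum_equiv (Equiv.addRight 1) _ _ (fun c => rfl)
  -- sum over c ≠ 0 of χ(c+1) is -1
  have hB : ∑ c : ZMod p, (if c ≠ 0 then χ (c + 1) else 0) = -1 := by
    have key : ∀ c : ZMod p, (if c ≠ 0 then χ (c + 1) else 0)
        = χ (c + 1) - (if c = 0 then 1 else 0) := by
      intro c
      by_cases hc : c = 0 <;> simp [hc]
    rw [Finset.sum_congr rfl (fun c _ => key c), Finset.sum_sub_distrib, hshift]
    simp
  -- inner sum for fixed a ≠ 0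
  have hinner : ∀ a : ZMod p, a ≠ 0 →
      (∑ b : ZMod p, if a ≠ 0 ∧ b ≠ 0 ∧ a ≠ b then χ (a * b + 1) else 0)
        = -1 - χ (a * a + 1) := by
    intro a ha
    have haa : a * a ≠ 0 := mul_ne_zero ha ha
    have step1 : (∑ b : ZMod p, if a ≠ 0 ∧ b ≠ 0 ∧ a ≠ b then χ (a * b + 1) else 0)
        = ∑ c : ZMod p, (if c ≠ 0 ∧ c ≠ a * a then χ (c + 1) else 0) := by
      refine Fintype.sum_equiv (Equiv.mulLeft₀ a ha) _ _ (fun b => ?_)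
      simp only [Equiv.coe_fn_mk, Equiv.mulLeft₀_apply]
      congr 1
      · simp only [eq_iff_iff]
        constructor
        · rintro ⟨-, hb, hab⟩
          exact ⟨mul_ne_zero ha hb, fun h => hab (mul_left_cancel₀ ha h.symm)⟩
        · rintro ⟨hab0, hab⟩
          exact ⟨ha, fun h => hab0 (by rw [h, mul_zero]), fun h => hab (by rw [h])⟩
    have step2 : ∀ c : ZMod p, (if c ≠ 0 ∧ c ≠ a * a then χ (c + 1) else 0)
        = (if c ≠ 0 then χ (c + 1) else 0) - (if c = a * a then χ (c + 1) else 0) := by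
      intro c
      by_cases h1 : c = a * a
      · subst h1; simp [haa]
      · by_cases h0 : c = 0 <;> simp [h0, h1, ha, haa]
    rw [step1, Finset.sum_congr rfl (fun c _ => step2 c), Finset.sum_sub_distrib, hB]
    congr 1
    rw [Finset.sum_ite_eq' Finset.univ (a * a) (fun c => χ (c + 1))]
    simp
  -- counting: ∑ a, χ(a*a+1) = -1
  have hsq : ∀ c : ZMod p, χ c + 1 = ∑ y : ZMod p, (if y * y = c then (1 : ℤ) else 0) := by
    intro c
    rw [← quadraticChar_card_sqrts hchar c]
    rw [Set.toFinset_setOf]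
    rw [Finset.sum_boole]
    norm_cast
    congr 1
    apply Finset.filter_congr
    intro y _
    rw [sq]
  have hD : ∑ a : ZMod p, χ (a * a + 1) = -1 := by
    have hpair : (∑ z : ZMod p × ZMod p, if z.2 * z.2 = z.1 * z.1 + 1 then (1 : ℤ) else 0)
        = ∑ w : ZMod p × ZMod p, (if w.1 * w.2 = 1 then (1 : ℤ) else 0) := by
      refine Fintype.sum_equiv ⟨fun z => (z.2 - z.1, z.2 + z.1),
        fun w => ((w.2 - w.1) / 2, (w.1 + w.2) / 2), ?_, ?_⟩ _ _ (fun z => ?_)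
      · intro z; ext <;> field_simp <;> ring
      · intro w; ext <;> field_simp <;> ring
      simp only [Equiv.coe_fn_mk]
      congr 1
      simp only [eq_iff_iff]
      constructor
      · intro h; linear_combination h
      · intro h; linear_combination h
    have hcount : (∑ w : ZMod p × ZMod p, if w.1 * w.2 = 1 then (1 : ℤ) else 0) = (p : ℤ) - 1 := by
      rw [Fintype.sum_prod_type]
      have inner : ∀ u : ZMod p, (∑ v : ZMod p, if u * v = 1 then (1 : ℤ) else 0)
          = (if u ≠ 0 then 1 else 0) := by
        intro u
        by_cases hu : u = 0
        · simp [hu]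
        · simp only [hu, ne_eq, not_false_eq_true, if_true]
          have : ∀ v : ZMod p, (u * v = 1) ↔ (v = u⁻¹) := by
            intro v
            constructor
            · intro h; field_simp at h ⊢; linear_combination h
            · rintro rfl; field_simp
          rw [Finset.sum_congr rfl (fun v _ => by rw [if_congr (this v) rfl rfl])]
          simp
      rw [Finset.sum_congr rfl (fun u _ => inner u)]
      have key : ∀ u : ZMod p, (if u ≠ 0 then (1:ℤ) else 0) = 1 - (if u = 0 then 1 else 0) := by
        intro u; by_cases hu : u = 0 <;> simp [hu]
      rw [Finset.sum_congr rfl (fun u _ => key u), Finset.sum_sub_distrib, hcardp]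
      simp
    have expand : ∑ a : ZMod p, (χ (a * a + 1) + 1)
        = ∑ z : ZMod p × ZMod p, if z.2 * z.2 = z.1 * z.1 + 1 then (1 : ℤ) else 0 := by
      rw [Fintype.sum_prod_type]
      exact Finset.sum_congr rfl (fun a _ => hsq (a * a + 1))
    have : ∑ a : ZMod p, (χ (a * a + 1) + 1) = (p : ℤ) - 1 := by
      rw [expand, hpair, hcount]
    rw [Finset.sum_add_distrib, hcardp] at this
    linarith
  -- sum over a ≠ 0 of χ(a*a+1) = -2
  have hE : ∑ a : ZMod p, (if a ≠ 0 then χ (a * a + 1) else 0) = -2 := by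
    have key : ∀ a : ZMod p, (if a ≠ 0 then χ (a * a + 1) else 0)
        = χ (a * a + 1) - (if a = 0 then 1 else 0) := by
      intro a; by_cases ha : a = 0 <;> simp [ha]
    rw [Finset.sum_congr rfl (fun a _ => key a), Finset.sum_sub_distrib, hD]
    simp
  -- put it together
  have main : (∑ a : ZMod p, ∑ b : ZMod p,
      if a ≠ 0 ∧ b ≠ 0 ∧ a ≠ b then χ (a * b + 1) else 0)
      = ∑ a : ZMod p, (if a ≠ 0 then (-1 - χ (a * a + 1)) else 0) := by
    refine Finset.sum_congr rfl (fun a _ => ?_)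
    by_cases ha : a = 0
    · simp [ha]
    · rw [hinner a ha]; simp [ha]
  rw [main]
  have split : ∀ a : ZMod p, (if a ≠ 0 then (-1 - χ (a * a + 1)) else 0)
      = (if a ≠ 0 then (-1 : ℤ) else 0) - (if a ≠ 0 then χ (a * a + 1) else 0) := by
    intro a; by_cases ha : a = 0 <;> simp [ha]
  rw [Finset.sum_congr rfl (fun a _ => split a), Finset.sum_sub_distrib, hE]
  have : ∑ a : ZMod p, (if a ≠ 0 then (-1 : ℤ) else 0) = -((p : ℤ) - 1) := by
    have key : ∀ a : ZMod p, (if a ≠ 0 then (-1:ℤ) else 0) = -1 + (if a = 0 then 1 else 0) := by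
      intro a; by_cases ha : a = 0 <;> simp [ha]
    rw [Finset.sum_congr rfl (fun a _ => key a), Finset.sum_add_distrib]
    have : ∑ _a : ZMod p, (-1 : ℤ) = -(p : ℤ) := by
      simp [Finset.card_univ, ZMod.card]
    rw [this]; simp; ring
  rw [this]; ring
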